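/- For n ≥ 1, the number of reverse alternating involutions of length 2n avoiding both patterns 2431 and 4132 equals 2^{n−1}. -/

import Mathlib

/-- A permutation is an involution if it equals its inverse. -/
def IsInvolution {n : ℕ} (π : Equiv.Perm (Fin n)) : Prop :=
  ∀ i, π (π i) = i

/-- `π` is alternating: `π i < π (i+1)` iff `i` is odd (1-based positions). -/
def IsAlternating {n : ℕ} (π : Equiv.Perm (Fin n)) : Prop :=
  ∀ (i : Fin n) (h : (i : ℕ) + 1 < n), (π i < π ⟨(i : ℕ) + 1, h⟩ ↔ Odd ((i : ℕ) + 1))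

/-- `π` is reverse alternating: `π i > π (i+1)` iff `i` is odd (1-based positions). -/
def IsRevAlternating {n : ℕ} (π : Equiv.Perm (Fin n)) : Prop :=
  ∀ (i : Fin n) (h : (i : ℕ) + 1 < n), (π ⟨(i : ℕ) + 1, h⟩ < π i ↔ Odd ((i : ℕ) + 1))

/-- `σ` contains the pattern `τ`. -/
def Contains {n k : ℕ} (σ : Equiv.Perm (Fin n)) (τ : Equiv.Perm (Fin k)) : Prop :=
  ∃ f : Fin k → Fin n, StrictMono f ∧ ∀ a b : Fin k, σ (f a) < σ (f b) ↔ τ a < τ b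

/-- `σ` avoids the pattern `τ`. -/
def Avoids {n k : ℕ} (σ : Equiv.Perm (Fin n)) (τ : Equiv.Perm (Fin k)) : Prop :=
  ¬ Contains σ τ
def p123 : Equiv.Perm (Fin 3) := ⟨![0,1,2], ![0,1,2], by decide, by decide⟩
def p132 : Equiv.Perm (Fin 3) := ⟨![0,2,1], ![0,2,1], by decide, by decide⟩
def p321 : Equiv.Perm (Fin 3) := ⟨![2,1,0], ![2,1,0], by decide, by decide⟩
def p1234 : Equiv.Perm (Fin 4) := ⟨![0,1,2,3], ![0,1,2,3], by decide, by decide⟩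
def p4321 : Equiv.Perm (Fin 4) := ⟨![3,2,1,0], ![3,2,1,0], by decide, by decide⟩
def p3412 : Equiv.Perm (Fin 4) := ⟨![2,3,0,1], ![2,3,0,1], by decide, by decide⟩
def p3421 : Equiv.Perm (Fin 4) := ⟨![2,3,1,0], ![3,2,0,1], by decide, by decide⟩
def p4312 : Equiv.Perm (Fin 4) := ⟨![3,2,0,1], ![2,3,1,0], by decide, by decide⟩
def p2431 : Equiv.Perm (Fin 4) := ⟨![1,3,2,0], ![3,0,2,1], by decide, by decide⟩
def p4132 : Equiv.Perm (Fin 4) := ⟨![3,0,2,1], ![1,3,2,0], by decide, by decide⟩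



/-- The block involution of size `2k` (as a function on ℕ, garbage off `[0,2k)`). -/
def blkG (k t : ℕ) : ℕ :=
  if t = 0 then 2*k - 1 else if t = 2*k - 1 then 0
  else if t % 2 = 1 then 2*k - 2 - t else 2*k - t

def isClass (N : ℕ) (f : ℕ → ℕ) : Prop :=
  (∀ j, j < N → f j < N) ∧ (∀ j, N ≤ j → f j = j) ∧ (∀ j, f (f j) = j) ∧
  (∀ j, j + 1 < N → (f (j+1) < f j ↔ j % 2 = 0)) ∧
  (∀ i j k l, i < j → j < k → k < l → l < N → ¬(f l < f i ∧ f i < f k ∧ f k < f j)) ∧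
  (∀ i j k l, i < j → j < k → k < l → l < N → ¬(f j < f l ∧ f l < f k ∧ f k < f i))

lemma blkG_lt (k t : ℕ) (hk : 1 ≤ k) (ht : t < 2*k) : blkG k t < 2*k := by
  unfold blkG; split_ifs <;> first | omega | simp_all

lemma blkG_invol (k t : ℕ) (hk : 1 ≤ k) (ht : t < 2*k) : blkG k (blkG k t) = t := by
  unfold blkG; split_ifs <;> first | omega | simp_all

lemma blkG_alt (k t : ℕ) (hk : 1 ≤ k) (ht : t + 1 < 2*k) :
    (blkG k (t+1) < blkG k t ↔ t % 2 = 0) := by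
  unfold blkG; split_ifs <;> first | omega | simp_all

lemma blkG_star (k i j : ℕ) (hk : 1 ≤ k) (hij : i < j) (hj : j < 2*k)
    (h : blkG k i < blkG k j) : blkG k j = blkG k i + 1 := by
  unfold blkG at *; split_ifs at * <;> first | omega | simp_all

lemma blkG_zero (k : ℕ) (hk : 1 ≤ k) : blkG k 0 = 2*k - 1 := by unfold blkG; simp

lemma blkG_last (k : ℕ) (hk : 1 ≤ k) : blkG k (2*k-1) = 0 := by
  unfold blkG; split_ifs <;> first | omega | simp_all

/-- Direct sum of block involutions; the head of the list is the block occupying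
the highest positions. -/
def phiF : List ℕ → ℕ → ℕ
  | [], j => j
  | k :: rest, j =>
    if j < 2 * rest.sum then phiF rest j
    else if j < 2 * rest.sum + 2 * k then 2 * rest.sum + blkG k (j - 2 * rest.sum) else j

lemma isClass_glue (M k : ℕ) (f : ℕ → ℕ) (hf : isClass M f) (hM : M % 2 = 0) (hk : 1 ≤ k) :
    isClass (M + 2*k)
      (fun j => if j < M then f j else if j < M + 2*k then M + blkG k (j - M) else j) := by
  obtain ⟨hrange, hoff, hinv, halt, hav1, hav2⟩ := hf
  have hrange' : ∀ j, j < M → f j < M := hrange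
  refine ⟨?_, ?_, ?_, ?_, ?_, ?_⟩
  · intro j hj
    by_cases h1 : j < M
    · simp only [if_pos h1]; have := hrange j h1; omega
    · simp only [if_neg h1, if_pos hj]
      have := blkG_lt k (j - M) hk (by omega); omega
  · intro j hj; simp only [if_neg (by omega : ¬ j < M), if_neg (by omega : ¬ j < M + 2*k)]
  · intro j
    by_cases h1 : j < M
    · have h2 := hrange j h1
      simp only [if_pos h1, if_pos h2]; exact hinv j
    · by_cases h2 : j < M + 2*k
      · have hb := blkG_lt k (j - M) hk (by omega)
        simp only [if_neg h1, if_pos h2, if_neg (by omega : ¬ M + blkG k (j - M) < M),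
          if_pos (by omega : M + blkG k (j - M) < M + 2*k)]
        have : M + blkG k (j-M) - M = blkG k (j-M) := by omega
        rw [this, blkG_invol k (j-M) hk (by omega)]; omega
      · simp only [if_neg h1, if_neg h2, if_neg (by omega : ¬ j < M)]
  · intro j hj
    by_cases h1 : j + 1 < M
    · simp only [if_pos h1, if_pos (by omega : j < M)]; exact halt j h1
    · by_cases h2 : j + 1 = M
      · have hjM : j < M := by omega
        have := hrange j hjM
        simp only [if_neg (by omega : ¬ j + 1 < M), if_pos hjM,
          if_pos (by omega : j + 1 < M + 2*k)]
        rw [(by omega : j + 1 - M = 0), blkG_zero k hk]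
        constructor
        · intro h; omega
        · intro h; omega
      · -- j ≥ M
        have hjM : ¬ j < M := by omega
        simp only [if_neg (by omega : ¬ j + 1 < M), if_neg hjM,
          if_pos (by omega : j + 1 < M + 2*k), if_pos (by omega : j < M + 2*k)]
        have := blkG_alt k (j - M) hk (by omega)
        rw [(by omega : j + 1 - M = (j - M) + 1)]
        constructor
        · intro h; have : blkG k (j-M+1) < blkG k (j-M) := by omega
          have := this.trans_le (le_refl _); omega
        · intro h; have : (j - M) % 2 = 0 := by omega
          have h2 := (blkG_alt k (j - M) hk (by omega)).2 this; omega
  · -- avoid 2431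
    intro i j k' l hij hjk hkl hl ⟨c1, c2, c3⟩
    by_cases hi : i < M
    · -- then l < M (value at l is below f i < M)
      have hfi : f i < M := hrange i hi
      have hlM : l < M := by
        by_contra hlM
        rcases lt_or_ge l (M + 2*k) with h | h
        · simp only [if_neg (by omega : ¬ l < M), if_pos h, if_pos hi] at c1; omega
        · omega
      exact hav1 i j k' l hij hjk hkl hlM
          ⟨by simpa [if_pos hi, if_pos hlM] using c1,
           by simpa [if_pos hi, if_pos (by omega : j < M), if_pos (by omega : k' < M)] using c2,
           by simpa [if_pos (by omega : j < M), if_pos (by omega : k' < M)] using c3⟩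
    · -- all in block
      have hiM : M ≤ i := by omega
      simp only [if_neg (by omega : ¬ i < M), if_neg (by omega : ¬ j < M),
        if_neg (by omega : ¬ k' < M), if_neg (by omega : ¬ l < M),
        if_pos (by omega : i < M + 2*k), if_pos (by omega : j < M + 2*k),
        if_pos (by omega : k' < M + 2*k), if_pos hl] at c1 c2 c3
      have hs := blkG_star k (i - M) (j - M) hk (by omega) (by omega) (by omega)
      omega
  · -- avoid 4132
    intro i j k' l hij hjk hkl hl ⟨c1, c2, c3⟩
    by_cases hi : i < M
    · have hfi : f i < M := hrange i hi
      have hk'M : k' < M := by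
        by_contra h
        rcases lt_or_ge k' (M + 2*k) with h2 | h2
        · simp only [if_neg (by omega : ¬ k' < M), if_pos h2, if_pos hi] at c3; omega
        · simp only [if_neg (by omega : ¬ k' < M), if_neg (by omega : ¬ k' < M + 2*k),
            if_pos hi] at c3; omega
      have hfk' : f k' < M := hrange k' hk'M
      have hlM : l < M := by
        by_contra h
        rcases lt_or_ge l (M + 2*k) with h2 | h2
        · simp only [if_neg (by omega : ¬ l < M), if_pos h2, if_pos hk'M] at c2; omega
        · simp only [if_neg (by omega : ¬ l < M), if_neg (by omega : ¬ l < M + 2*k),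
            if_pos hk'M] at c2; omega
      exact hav2 i j k' l hij hjk hkl hlM
          ⟨by simpa [if_pos hlM, if_pos (by omega : j < M)] using c1,
           by simpa [if_pos hlM, if_pos (by omega : k' < M)] using c2,
           by simpa [if_pos hi, if_pos (by omega : k' < M)] using c3⟩
    · simp only [if_neg (by omega : ¬ i < M), if_neg (by omega : ¬ j < M),
        if_neg (by omega : ¬ k' < M), if_neg (by omega : ¬ l < M),
        if_pos (by omega : i < M + 2*k), if_pos (by omega : j < M + 2*k),
        if_pos (by omega : k' < M + 2*k), if_pos hl] at c1 c2 c3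
      have hs := blkG_star k (j - M) (k' - M) hk (by omega) (by omega) (by omega)
      omega

lemma isClass_phiF : ∀ (c : List ℕ), (∀ x ∈ c, 0 < x) → isClass (2 * c.sum) (phiF c)
  | [], _ => by
    refine ⟨?_, ?_, ?_, ?_, ?_, ?_⟩ <;> simp [phiF] <;> omega
  | k :: rest, hc => by
    have hrest := isClass_phiF rest (fun x hx => hc x (List.mem_cons_of_mem _ hx))
    have hk : 1 ≤ k := hc k List.mem_cons_self
    have hg := isClass_glue (2 * rest.sum) k (phiF rest) hrest (by omega) hk
    have hN : 2 * (k :: rest).sum = 2 * rest.sum + 2 * k := by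
      simp [List.sum_cons]; ring
    rw [hN]
    exact hg

def hU (r t : ℕ) : ℕ := if t % 2 = 0 then 2*r - 2 - t else 2*r - t

/-- The unique alternating (ascent-first) involution on `[0,2r)` avoiding 132 is `hU r`. -/
lemma lemU : ∀ (r : ℕ) (σ : ℕ → ℕ),
    (∀ t, t < 2*r → σ t < 2*r) → (∀ t, t < 2*r → σ (σ t) = t) →
    (∀ t, t + 1 < 2*r → (σ (t+1) < σ t ↔ t % 2 = 1)) →
    (∀ a b c, a < b → b < c → c < 2*r → ¬(σ a < σ c ∧ σ c < σ b)) →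
    ∀ t, t < 2*r → σ t = hU r t := by
  intro r
  induction r using Nat.strong_induction_on with
  | _ r IH =>
    intro σ hrg hinv halt hav t ht
    rcases Nat.eq_zero_or_pos r with hr0 | hr
    · omega
    -- z = σ 0, σ z = 0
    have h02r : 0 < 2*r := by omega
    have hz : σ (σ 0) = 0 := hinv 0 h02r
    have hzlt : σ 0 < 2*r := hrg 0 h02r
    -- z even
    have hzev : σ 0 % 2 = 0 := by
      by_contra hodd
      rcases Nat.lt_or_ge (σ 0 + 1) (2*r) with h | h
      · have := (halt (σ 0) h).2 (by omega)
        omega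
      · -- σ 0 = 2r - 1
        have he : σ 0 = 2*r - 1 := by omega
        have h1 : ¬ (σ (2*r - 1) < σ (2*r - 2)) := by
          intro hlt
          have := (halt (2*r - 2) (by omega)).1 (by
            rw [(by omega : 2*r - 2 + 1 = 2*r - 1)]; exact hlt)
          omega
        rw [← he] at h1
        rw [hz] at h1
        have : σ (2*r - 2) = 0 := by omega
        have h2 : σ (σ (2*r-2)) = 2*r - 2 := hinv _ (by omega)
        rw [this] at h2
        omega
    -- z = 2r - 2
    have hz2 : σ 0 = 2*r - 2 := by
      by_contra hne
      have hzle : σ 0 ≤ 2*r - 4 := by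
        have : σ 0 ≠ 2*r - 1 := by intro h; omega
        omega
      have hne2 : σ (σ 0 + 2) ≠ 0 := by
        intro h
        have h2 : σ (σ (σ 0 + 2)) = σ 0 + 2 := hinv _ (by omega)
        rw [h] at h2
        omega
      have hdesc : σ (σ 0 + 2) < σ (σ 0 + 1) := by
        have h3 := (halt (σ 0 + 1) (by omega)).2 (by omega)
        rw [(by omega : σ 0 + 1 + 1 = σ 0 + 2)] at h3
        exact h3
      exact hav (σ 0) (σ 0 + 1) (σ 0 + 2) (by omega) (by omega) (by omega)
        ⟨by omega, hdesc⟩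
    -- σ 1 = 2r - 1
    have h1v : σ 1 = 2*r - 1 := by
      rcases Nat.eq_or_lt_of_le hr with hr1 | hr2
      · -- r = 1 : σ 1 < 2, σ 1 ≠ σ 0 = 0
        have : σ 1 < 2*r := hrg 1 (by omega)
        have hne : σ 1 ≠ σ 0 := by
          intro h
          have h2 := hinv 1 (by omega)
          rw [h, hz] at h2; omega
        omega
      · have hasc : ¬ (σ 1 < σ 0) := by
          have := (halt 0 (by omega)).1
          intro h; have := this h; omega
        have : σ 1 < 2*r := hrg 1 (by omega)
        have hne : σ 1 ≠ σ 0 := by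
          intro h
          have h2 := hinv 1 (by omega)
          rw [h, hz] at h2; omega
        omega
    have h2r2 : σ (2*r - 2) = 0 := by rw [← hz2, hz]
    have h2r1 : σ (2*r - 1) = 1 := by
      have := hinv 1 (by omega)
      rw [h1v] at this; exact this
    -- dispatch small cases
    rcases (by omega : t = 0 ∨ t = 1 ∨ t = 2*r - 2 ∨ t = 2*r - 1 ∨ (2 ≤ t ∧ t ≤ 2*r - 3)) with
      h | h | h | h | ⟨ht2, ht3⟩
    · subst h; rw [hz2]; unfold hU; simp
    · subst h; rw [h1v]; unfold hU; norm_num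
    · rw [h, h2r2]; unfold hU; split_ifs <;> omega
    · rw [h, h2r1]; unfold hU; split_ifs <;> omega
    · -- interior: use IH with r - 2
      have hr2 : 2 ≤ r := by omega
      -- interior values lie in [2, 2r-2)
      have hival : ∀ s, 2 ≤ s → s < 2*r - 2 → 2 ≤ σ s ∧ σ s < 2*r - 2 := by
        intro s hs1 hs2
        have hlt := hrg s (by omega)
        have hinvs := hinv s (by omega)
        refine ⟨?_, ?_⟩
        · rcases (by omega : σ s = 0 ∨ σ s = 1 ∨ 2 ≤ σ s) with h | h | h
          · rw [h] at hinvs; omega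
          · rw [h, h1v] at hinvs; omega
          · exact h
        · rcases (by omega : σ s = 2*r - 1 ∨ σ s = 2*r - 2 ∨ σ s < 2*r - 2) with h | h | h
          · rw [h, h2r1] at hinvs; omega
          · rw [h, h2r2] at hinvs; omega
          · exact h
      set σ' : ℕ → ℕ := fun s => σ (s + 2) - 2 with hσ'
      have key : ∀ s, s < 2*(r-2) → σ' s = hU (r-2) s := by
        apply IH (r-2) (by omega)
        · intro s hs
          have := hival (s+2) (by omega) (by omega)
          simp only [hσ']; omega
        · intro s hs
          have h1 := hival (s+2) (by omega) (by omega)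
          have h2 := hinv (s+2) (by omega)
          simp only [hσ']
          rw [(by omega : σ (s+2) - 2 + 2 = σ (s+2)), h2]
          omega
        · intro s hs
          have h1 := hival (s+2) (by omega) (by omega)
          have h2 := hival (s+3) (by omega) (by omega)
          have h3 := halt (s+2) (by omega)
          rw [(by omega : s + 2 + 1 = s + 3)] at h3
          simp only [hσ']
          rw [(by omega : s + 1 + 2 = s + 3)]
          constructor
          · intro h; exact (by omega : (s+2) % 2 = 1 → s % 2 = 1) (h3.1 (by omega))
          · intro h; have := h3.2 (by omega); omega
        · intro a b c hab hbc hc ⟨hc1, hc2⟩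
          have h1 := hival (a+2) (by omega) (by omega)
          have h2 := hival (b+2) (by omega) (by omega)
          have h3 := hival (c+2) (by omega) (by omega)
          exact hav (a+2) (b+2) (c+2) (by omega) (by omega) (by omega)
            ⟨by simp only [hσ'] at hc1; omega, by simp only [hσ'] at hc2; omega⟩
      have hks := key (t - 2) (by omega)
      have h1 := hival t ht2 (by omega)
      simp only [hσ'] at hks
      rw [(by omega : t - 2 + 2 = t)] at hks
      unfold hU at hks ⊢
      split_ifs at hks ⊢ <;> omega

lemma phiF_off : ∀ (c : List ℕ) (j : ℕ), 2 * c.sum ≤ j → phiF c j = j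
  | [], j, _ => rfl
  | k :: rest, j, hj => by
    have h1 : ¬ j < 2 * rest.sum := by simp [List.sum_cons] at hj; omega
    have h2 : ¬ j < 2 * rest.sum + 2 * k := by simp [List.sum_cons] at hj; omega
    simp only [phiF, if_neg h1, if_neg h2]

/-- Structure theorem: every class member is a direct sum of blocks. -/
lemma structure_thm : ∀ (N : ℕ) (f : ℕ → ℕ), isClass N f → N % 2 = 0 →
    ∃ c : List ℕ, (∀ x ∈ c, 0 < x) ∧ 2 * c.sum = N ∧ ∀ j, phiF c j = f j := by
  intro N
  induction N using Nat.strong_induction_on with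
  | _ N IH =>
    intro f hf hNev
    obtain ⟨hrange, hoff, hinv, halt, hav1, hav2⟩ := hf
    rcases Nat.eq_zero_or_pos N with hN0 | hNpos
    · exact ⟨[], by simp, by simp [hN0], fun j => (hoff j (by omega)).symm⟩
    have hN2 : 2 ≤ N := by omega
    set p := f (N-1) with hp
    have hpN : p < N := hrange (N-1) (by omega)
    have hfp : f p = N - 1 := by rw [hp]; exact hinv (N-1)
    have haltN : f (N-1) < f (N-2) := by
      have := (halt (N-2) (by omega : N - 2 + 1 < N)).2 (by omega)
      rw [(by omega : N - 2 + 1 = N - 1)] at this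
      exact this
    have hpne : p ≠ N - 1 := by
      intro h
      have h2 := hrange (N-2) (by omega)
      rw [← h] at haltN
      rw [hp] at h  -- f (N-1) = N-1
      omega
    have hpe : p % 2 = 0 := by
      by_contra hodd
      have hp1 : 1 ≤ p := by omega
      have h2 := (halt (p-1) (by omega)).2 (by omega)
      rw [(by omega : p - 1 + 1 = p), hfp] at h2
      have := hrange (p-1) (by omega)
      omega
    -- Claim 1 : positions below p have values below p
    have claim1 : ∀ x, x < p → f x < p := by
      by_contra hcon
      push_neg at hcon
      obtain ⟨x, hx, hfx⟩ := hcon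
      -- take x0 maximizing f over range p
      obtain ⟨x0, hx0mem, hx0max⟩ :=
        Finset.exists_max_image (Finset.range p) f ⟨x, Finset.mem_range.2 hx⟩
      rw [Finset.mem_range] at hx0mem
      set w := f x0 with hw
      have hwge : p ≤ w := le_trans hfx (hx0max x (Finset.mem_range.2 hx))
      have hwne : w ≠ p := by
        intro h
        have : f w = x0 := by rw [hw]; exact hinv x0
        rw [h, hfp] at this; omega
      have hwne1 : w ≠ N - 1 := by
        intro h
        have : f w = x0 := by rw [hw]; exact hinv x0
        rw [h, ← hp] at this
        omega
      have hwne2 : w ≠ N - 2 := by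
        intro h
        have h2 : f w = x0 := by rw [hw]; exact hinv x0
        rw [h] at h2
        -- f (N-2) = x0 > f (N-1) = p, but x0 < p
        rw [h2, ← hp] at haltN
        omega
      have hwlt : w < N := hrange x0 (by omega)
      have hw3 : w + 1 ≤ N - 2 := by omega
      set k0 := f (w+1) with hk0
      have hfk0 : f k0 = w + 1 := by rw [hk0]; exact hinv (w+1)
      have hk0p : p < k0 := by
        rcases Nat.lt_trichotomy k0 p with h | h | h
        · have := hx0max k0 (Finset.mem_range.2 h)
          rw [hfk0] at this; omega
        · exfalso; rw [← h] at hfp; omega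
        · exact h
      have hk0N : k0 < N - 1 := by
        have h1 : k0 < N := hrange (w+1) (by omega)
        rcases Nat.eq_or_lt_of_le (by omega : k0 ≤ N - 1) with h | h
        · exfalso
          rw [h] at hfk0
          rw [← hp] at hfk0
          omega
        · omega
      exact hav1 x0 p k0 (N-1) (by omega) hk0p hk0N (by omega)
        ⟨by rw [← hp]; omega, by rw [hfk0]; omega, by rw [hfk0, hfp]; omega⟩
    have claim1b : ∀ x, p ≤ x → x < N → p ≤ f x := by
      intro x hx1 hx2
      by_contra h
      have := claim1 (f x) (by omega)
      rw [hinv x] at this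
      omega
    -- the suffix block
    set r := (N - p - 2) / 2 with hr
    have h2r : 2 * r = N - p - 2 := by omega
    have hival : ∀ s, s < 2*r → p + 1 ≤ f (p+1+s) ∧ f (p+1+s) < N - 1 := by
      intro s hs
      have h1 : f (p+1+s) < N := hrange _ (by omega)
      have h2 : p ≤ f (p+1+s) := claim1b _ (by omega) (by omega)
      constructor
      · rcases Nat.eq_or_lt_of_le h2 with h | h
        · exfalso
          have := hinv (p+1+s)
          rw [← h, hfp] at this
          omega
        · omega
      · rcases Nat.eq_or_lt_of_le (by omega : f (p+1+s) ≤ N - 1) with h | h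
        · exfalso
          have := hinv (p+1+s)
          rw [h, ← hp] at this
          omega
        · omega
    set σ : ℕ → ℕ := fun s => f (p+1+s) - (p+1) with hσ
    have hkey : ∀ s, s < 2*r → σ s = hU r s := by
      apply lemU r σ
      · intro s hs
        have := hival s hs
        simp only [hσ]; omega
      · intro s hs
        have h1 := hival s hs
        have h2 := hinv (p+1+s)
        simp only [hσ]
        rw [(by omega : p + 1 + (f (p+1+s) - (p+1)) = f (p+1+s)), h2]
        omega
      · intro s hs
        have h1 := hival s (by omega)
        have h2 := hival (s+1) hs
        have h3 := halt (p+1+s) (by omega)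
        rw [(by omega : p+1+s+1 = p+1+(s+1))] at h3
        simp only [hσ]
        constructor
        · intro h
          have := h3.1 (by omega)
          omega
        · intro h
          have := h3.2 (by omega)
          omega
      · intro a b c hab hbc hc ⟨h1, h2⟩
        have ha' := hival a (by omega)
        have hb' := hival b (by omega)
        have hc' := hival c (by omega)
        exact hav2 p (p+1+a) (p+1+b) (p+1+c) (by omega) (by omega) (by omega) (by omega)
          ⟨by simp only [hσ] at h1; omega, by simp only [hσ] at h2; omega,
           by rw [hfp]; omega⟩
    -- values of f on the block
    set k := (N - p) / 2 with hkdef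
    have h2k : 2 * k = N - p := by omega
    have hk1 : 1 ≤ k := by omega
    have hblock : ∀ t, t < 2*k → f (p + t) = p + blkG k t := by
      intro t ht
      rcases (by omega : t = 0 ∨ t = 2*k - 1 ∨ (1 ≤ t ∧ t ≤ 2*k - 2)) with h | h | ⟨h1, h2⟩
      · subst h
        rw [blkG_zero k hk1]
        simp only [Nat.add_zero]
        rw [hfp]; omega
      · rw [h, blkG_last k hk1]
        rw [(by omega : p + (2*k-1) = N - 1), ← hp]
        omega
      · have hs := hkey (t-1) (by omega)
        have hi := hival (t-1) (by omega)
        simp only [hσ] at hs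
        rw [(by omega : p + 1 + (t-1) = p + t)] at hs hi
        unfold hU at hs
        unfold blkG
        split_ifs at hs ⊢ <;> omega
    -- prefix
    set f' : ℕ → ℕ := fun j => if j < p then f j else j with hf'
    have hclass' : isClass p f' := by
      refine ⟨?_, ?_, ?_, ?_, ?_, ?_⟩
      · intro j hj; simp only [hf', if_pos hj]; exact claim1 j hj
      · intro j hj; simp only [hf', if_neg (by omega : ¬ j < p)]
      · intro j
        by_cases h : j < p
        · have h2 := claim1 j h
          simp only [hf', if_pos h, if_pos h2]; exact hinv j
        · simp only [hf', if_neg h]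
      · intro j hj
        simp only [hf', if_pos (by omega : j + 1 < p), if_pos (by omega : j < p)]
        exact halt j (by omega)
      · intro i j k' l hij hjk hkl hl
        simp only [hf', if_pos (by omega : i < p), if_pos (by omega : j < p),
          if_pos (by omega : k' < p), if_pos (by omega : l < p)]
        exact hav1 i j k' l hij hjk hkl (by omega)
      · intro i j k' l hij hjk hkl hl
        simp only [hf', if_pos (by omega : i < p), if_pos (by omega : j < p),
          if_pos (by omega : k' < p), if_pos (by omega : l < p)]
        exact hav2 i j k' l hij hjk hkl (by omega)
    obtain ⟨c', hc'pos, hc'sum, hc'eq⟩ := IH p (by omega) f' hclass' hpe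
    refine ⟨k :: c', ?_, ?_, ?_⟩
    · intro x hx
      rcases List.mem_cons.1 hx with h | h
      · omega
      · exact hc'pos x h
    · simp only [List.sum_cons]; omega
    · intro j
      simp only [phiF, hc'sum]
      by_cases h1 : j < p
      · rw [if_pos h1, hc'eq j]
        simp only [hf', if_pos h1]
      · by_cases h2 : j < p + 2*k
        · rw [if_neg h1, if_pos h2]
          rw [← hblock (j - p) (by omega)]
          congr 1
          omega
        · rw [if_neg h1, if_neg h2]
          exact (hoff j (by omega)).symm

lemma phiF_last (k : ℕ) (rest : List ℕ) (hk : 1 ≤ k) :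
    phiF (k :: rest) (2 * (k :: rest).sum - 1) = 2 * rest.sum := by
  have hs : 2 * (k :: rest).sum - 1 = 2 * rest.sum + (2*k - 1) := by
    simp [List.sum_cons]; omega
  rw [hs]
  simp only [phiF, if_neg (by omega : ¬ 2 * rest.sum + (2*k-1) < 2 * rest.sum),
    if_pos (by omega : 2 * rest.sum + (2*k-1) < 2 * rest.sum + 2 * k)]
  rw [(by omega : 2 * rest.sum + (2*k-1) - 2 * rest.sum = 2*k - 1), blkG_last k hk]
  omega

lemma phiF_inj : ∀ (c1 c2 : List ℕ), (∀ x ∈ c1, 0 < x) → (∀ x ∈ c2, 0 < x) →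
    c1.sum = c2.sum → (∀ j, phiF c1 j = phiF c2 j) → c1 = c2
  | [], [], _, _, _, _ => rfl
  | [], k :: rest, h1, h2, hs, _ => by
    exfalso
    have := h2 k List.mem_cons_self
    simp [List.sum_cons] at hs
    omega
  | k :: rest, [], h1, h2, hs, _ => by
    exfalso
    have := h1 k List.mem_cons_self
    simp [List.sum_cons] at hs
    omega
  | k1 :: r1, k2 :: r2, h1, h2, hs, heq => by
    have hk1 : 1 ≤ k1 := h1 k1 List.mem_cons_self
    have hk2 : 1 ≤ k2 := h2 k2 List.mem_cons_self
    have hL := phiF_last k1 r1 hk1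
    have hR := phiF_last k2 r2 hk2
    have hsum : (k1 :: r1).sum = (k2 :: r2).sum := hs
    rw [heq (2 * (k1 :: r1).sum - 1)] at hL
    rw [hsum] at hL
    rw [hR] at hL
    -- hL : 2 * r2.sum = 2 * r1.sum  (direction?)
    have hrsum : r1.sum = r2.sum := by
      simp [List.sum_cons] at hsum
      omega
    have hkk : k1 = k2 := by
      simp [List.sum_cons] at hsum
      omega
    subst hkk
    have htail : ∀ j, phiF r1 j = phiF r2 j := by
      intro j
      by_cases hj : j < 2 * r1.sum
      · have e1 : phiF (k1 :: r1) j = phiF r1 j := by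
          simp only [phiF, if_pos hj]
        have e2 : phiF (k1 :: r2) j = phiF r2 j := by
          simp only [phiF, if_pos (show j < 2 * r2.sum by omega)]
        rw [← e1, ← e2, heq j]
      · rw [phiF_off r1 j (by omega), phiF_off r2 j (by omega)]
    rw [phiF_inj r1 r2 (fun x hx => h1 x (List.mem_cons_of_mem _ hx))
      (fun x hx => h2 x (List.mem_cons_of_mem _ hx)) hrsum htail]

section Transfer

open Equiv

/-- Explicit index description of containment of 2431. -/
lemma contains2431_iff {N : ℕ} (σ : Equiv.Perm (Fin N)) :
    Contains σ p2431 ↔ ∃ i j k l : Fin N, i < j ∧ j < k ∧ k < l ∧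
      σ l < σ i ∧ σ i < σ k ∧ σ k < σ j := by
  constructor
  · rintro ⟨g, hmono, hiff⟩
    refine ⟨g 0, g 1, g 2, g 3, hmono (by decide), hmono (by decide), hmono (by decide),
      (hiff 3 0).2 (by decide), (hiff 0 2).2 (by decide), (hiff 2 1).2 (by decide)⟩
  · rintro ⟨i, j, k, l, h1, h2, h3, c1, c2, c3⟩
    have h1' := h1; have h2' := h2; have h3' := h3
    have c1' := c1; have c2' := c2; have c3' := c3
    rw [Fin.lt_def] at h1' h2' h3' c1' c2' c3'
    refine ⟨![i, j, k, l], ?_, ?_⟩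
    · intro a b hab
      have hab' := hab
      rw [Fin.lt_def] at hab'
      fin_cases a <;> fin_cases b <;>
        simp only [Fin.mk_zero, Fin.mk_one, Fin.zero_eta, Matrix.cons_val_zero,
          Matrix.cons_val_one, Matrix.head_cons, Fin.lt_def, Matrix.cons_val_two,
          Matrix.tail_cons, Matrix.cons_val_three, Matrix.head_fin_const] at hab' ⊢ <;>
        first
          | omega
          | (simp at hab' ⊢ <;> omega)
    · intro a b
      fin_cases a <;> fin_cases b <;>
        first
          | (simp; done)
          | · simp only [Fin.zero_eta, Fin.mk_one, Matrix.cons_val_zero, Matrix.cons_val_one,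
                Matrix.head_cons]
              first
                | (simp
                   constructor
                   · intro h
                     first
                       | decide
                       | (exfalso; rw [Fin.lt_def] at h; omega)
                   · intro h
                     first
                       | (rw [Fin.lt_def]; omega)
                       | (exact absurd h (by decide)))
                | (constructor
                   · intro h
                     first
                       | decide
                       | (exfalso; rw [Fin.lt_def] at h; omega)
                   · intro h
                     first
                       | (rw [Fin.lt_def]; omega)
                       | (exact absurd h (by decide)))

/-- Explicit index description of containment of 4132. -/
lemma contains4132_iff {N : ℕ} (σ : Equiv.Perm (Fin N)) :
    Contains σ p4132 ↔ ∃ i j k l : Fin N, i < j ∧ j < k ∧ k < l ∧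
      σ j < σ l ∧ σ l < σ k ∧ σ k < σ i := by
  constructor
  · rintro ⟨g, hmono, hiff⟩
    refine ⟨g 0, g 1, g 2, g 3, hmono (by decide), hmono (by decide), hmono (by decide),
      (hiff 1 3).2 (by decide), (hiff 3 2).2 (by decide), (hiff 2 0).2 (by decide)⟩
  · rintro ⟨i, j, k, l, h1, h2, h3, c1, c2, c3⟩
    have h1' := h1; have h2' := h2; have h3' := h3
    have c1' := c1; have c2' := c2; have c3' := c3
    rw [Fin.lt_def] at h1' h2' h3' c1' c2' c3'
    refine ⟨![i, j, k, l], ?_, ?_⟩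
    · intro a b hab
      have hab' := hab
      rw [Fin.lt_def] at hab'
      fin_cases a <;> fin_cases b <;>
        simp only [Fin.mk_zero, Fin.mk_one, Fin.zero_eta, Matrix.cons_val_zero,
          Matrix.cons_val_one, Matrix.head_cons, Fin.lt_def, Matrix.cons_val_two,
          Matrix.tail_cons, Matrix.cons_val_three, Matrix.head_fin_const] at hab' ⊢ <;>
        first
          | omega
          | (simp at hab' ⊢ <;> omega)
    · intro a b
      fin_cases a <;> fin_cases b <;>
        first
          | (simp; done)
          | · simp only [Fin.zero_eta, Fin.mk_one, Matrix.cons_val_zero, Matrix.cons_val_one,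
                Matrix.head_cons]
              first
                | (simp
                   constructor
                   · intro h
                     first
                       | decide
                       | (exfalso; rw [Fin.lt_def] at h; omega)
                   · intro h
                     first
                       | (rw [Fin.lt_def]; omega)
                       | (exact absurd h (by decide)))
                | (constructor
                   · intro h
                     first
                       | decide
                       | (exfalso; rw [Fin.lt_def] at h; omega)
                   · intro h
                     first
                       | (rw [Fin.lt_def]; omega)
                       | (exact absurd h (by decide)))

/-- Function-level data from a permutation. -/
def permFun {N : ℕ} (π : Equiv.Perm (Fin N)) : ℕ → ℕ :=
  fun j => if h : j < N then (π ⟨j, h⟩ : ℕ) else j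

lemma isClass_permFun {N : ℕ} (hN : N % 2 = 0) (π : Equiv.Perm (Fin N))
    (h1 : IsInvolution π) (h2 : IsRevAlternating π) (h3 : Avoids π p2431)
    (h4 : Avoids π p4132) : isClass N (permFun π) := by
  refine ⟨?_, ?_, ?_, ?_, ?_, ?_⟩
  · intro j hj; simp only [permFun, dif_pos hj]; exact (π ⟨j, hj⟩).isLt
  · intro j hj; simp only [permFun, dif_neg (by omega : ¬ j < N)]
  · intro j
    by_cases hj : j < N
    · simp only [permFun, dif_pos hj, Fin.is_lt, dif_pos, Fin.eta]
      rw [h1 ⟨j, hj⟩]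
    · simp only [permFun, dif_neg hj]
  · intro j hj
    have hjN : j < N := by omega
    have h6 : (π ⟨j+1, hj⟩ < π ⟨j, hjN⟩ ↔ Odd (j+1)) := h2 ⟨j, hjN⟩ hj
    rw [Fin.lt_def, Nat.odd_iff] at h6
    simp only [permFun, dif_pos hj, dif_pos hjN]
    omega
  · intro i j k l hij hjk hkl hl ⟨c1, c2, c3⟩
    have hi : i < N := by omega
    have hj : j < N := by omega
    have hk : k < N := by omega
    simp only [permFun, dif_pos hi, dif_pos hj, dif_pos hk, dif_pos hl] at c1 c2 c3
    exact h3 ((contains2431_iff π).2 ⟨⟨i, hi⟩, ⟨j, hj⟩, ⟨k, hk⟩, ⟨l, hl⟩,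
      by simpa [Fin.lt_def] using hij, by simpa [Fin.lt_def] using hjk,
      by simpa [Fin.lt_def] using hkl,
      by rw [Fin.lt_def]; exact c1, by rw [Fin.lt_def]; exact c2,
      by rw [Fin.lt_def]; exact c3⟩)
  · intro i j k l hij hjk hkl hl ⟨c1, c2, c3⟩
    have hi : i < N := by omega
    have hj : j < N := by omega
    have hk : k < N := by omega
    simp only [permFun, dif_pos hi, dif_pos hj, dif_pos hk, dif_pos hl] at c1 c2 c3
    exact h4 ((contains4132_iff π).2 ⟨⟨i, hi⟩, ⟨j, hj⟩, ⟨k, hk⟩, ⟨l, hl⟩,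
      by simpa [Fin.lt_def] using hij, by simpa [Fin.lt_def] using hjk,
      by simpa [Fin.lt_def] using hkl,
      by rw [Fin.lt_def]; exact c1, by rw [Fin.lt_def]; exact c2,
      by rw [Fin.lt_def]; exact c3⟩)

/-- Build a permutation of `Fin N` from a class function. -/
def classPerm (N : ℕ) (f : ℕ → ℕ) (hcl : isClass N f) : Equiv.Perm (Fin N) :=
  Function.Involutive.toPerm (fun x => ⟨f x, hcl.1 x x.isLt⟩)
    (fun x => by
      ext
      simp only [Fin.val_mk]
      exact hcl.2.2.1 x)

lemma classPerm_apply (N : ℕ) (f : ℕ → ℕ) (hcl : isClass N f) (x : Fin N) :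
    (classPerm N f hcl x : ℕ) = f x := rfl

lemma classPerm_conds (N : ℕ) (hN : N % 2 = 0) (f : ℕ → ℕ) (hcl : isClass N f) :
    IsInvolution (classPerm N f hcl) ∧ IsRevAlternating (classPerm N f hcl) ∧
      Avoids (classPerm N f hcl) p2431 ∧ Avoids (classPerm N f hcl) p4132 := by
  obtain ⟨hrange, hoff, hinv, halt, hav1, hav2⟩ := id hcl
  refine ⟨?_, ?_, ?_, ?_⟩
  · intro x
    ext
    rw [classPerm_apply, classPerm_apply]
    exact hinv x
  · intro i h
    have h6 := halt i h
    rw [Fin.lt_def, Nat.odd_iff, classPerm_apply, classPerm_apply]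
    simp only [Fin.val_mk]
    omega
  · intro hcon
    obtain ⟨i, j, k, l, h1, h2, h3, c1, c2, c3⟩ := (contains2431_iff _).1 hcon
    rw [Fin.lt_def] at h1 h2 h3 c1 c2 c3
    rw [classPerm_apply, classPerm_apply] at c1 c2 c3
    exact hav1 i j k l h1 h2 h3 l.isLt ⟨c1, c2, c3⟩
  · intro hcon
    obtain ⟨i, j, k, l, h1, h2, h3, c1, c2, c3⟩ := (contains4132_iff _).1 hcon
    rw [Fin.lt_def] at h1 h2 h3 c1 c2 c3
    rw [classPerm_apply, classPerm_apply] at c1 c2 c3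
    exact hav2 i j k l h1 h2 h3 l.isLt ⟨c1, c2, c3⟩

end Transfer

/-- For n ≥ 1, the number of reverse alternating involutions of length 2n
avoiding both 2431 and 4132 is 2^{n-1}. -/
theorem card_RAI_even_avoiding_2431_4132 (n : ℕ) (hn : 1 ≤ n) :
    Nat.card {π : Equiv.Perm (Fin (2 * n)) //
      IsInvolution π ∧ IsRevAlternating π ∧ Avoids π p2431 ∧ Avoids π p4132} =
    2 ^ (n - 1) := by
  have hNev : (2 * n) % 2 = 0 := by omega
  have hcls : ∀ c : Composition n, isClass (2 * n) (phiF c.blocks) := by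
    intro c
    have := isClass_phiF c.blocks (fun x hx => c.blocks_pos hx)
    rwa [c.blocks_sum] at this
  set F : Composition n → {π : Equiv.Perm (Fin (2 * n)) //
      IsInvolution π ∧ IsRevAlternating π ∧ Avoids π p2431 ∧ Avoids π p4132} :=
    fun c => ⟨classPerm (2*n) (phiF c.blocks) (hcls c),
      classPerm_conds (2*n) hNev (phiF c.blocks) (hcls c)⟩ with hF
  have hbij : Function.Bijective F := by
    constructor
    · intro c1 c2 hc
      have hfun : ∀ j, phiF c1.blocks j = phiF c2.blocks j := by
        intro j
        by_cases hj : j < 2 * n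
        · have := congrArg Subtype.val hc
          have h2 := congrFun (congrArg (fun (e : Equiv.Perm (Fin (2*n))) =>
            (e : Fin (2*n) → Fin (2*n))) this) ⟨j, hj⟩
          have h3 := congrArg Fin.val h2
          rwa [classPerm_apply, classPerm_apply] at h3
        · rw [phiF_off c1.blocks j (by rw [c1.blocks_sum]; omega),
            phiF_off c2.blocks j (by rw [c2.blocks_sum]; omega)]
      have := phiF_inj c1.blocks c2.blocks (fun x hx => c1.blocks_pos hx)
        (fun x hx => c2.blocks_pos hx) (by rw [c1.blocks_sum, c2.blocks_sum]) hfun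
      cases c1; cases c2; simpa using this
    · rintro ⟨π, h1, h2, h3, h4⟩
      have hclπ := isClass_permFun hNev π h1 h2 h3 h4
      obtain ⟨c, hcpos, hcsum, hceq⟩ := structure_thm (2*n) (permFun π) hclπ hNev
      have hsum : c.sum = n := by omega
      refine ⟨⟨c, fun {x} hx => hcpos x hx, hsum⟩, ?_⟩
      rw [hF]
      apply Subtype.ext
      apply Equiv.ext
      intro x
      apply Fin.ext
      rw [classPerm_apply]
      simp only
      rw [hceq x]
      simp only [permFun, dif_pos x.isLt]
  rw [← Nat.card_eq_of_bijective F hbij, Nat.card_eq_fintype_card, composition_card]
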